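/- arXiv:1302.3752 — 2 statements merged into one kernel-verified Lean document; each statement's English description precedes it below -/
import Mathlib

section
/- Fix an interval [β_i, β_{i+1}] ⊆ [C_p, T]. The contribution to the waste as a function of q_i has the form K + A·q_i·∫_{β_i}^{β_{i+1}} (C_p/T - p·t/T) dt with A > 0; hence the waste is minimized by q_i = 0 whenever β_{i+1} ≤ C_p/p, and by q_i = 1 whenever β_i ≥ C_p/p. -/
theorem refined_policy_trust (T C Cp p μP K : ℝ) (β₁ β₂ : ℝ) (W : ℝ → ℝ)
    (hCp : 0 < Cp) (hC : 0 < C) (hCT : C < T)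
    (hp0 : 0 < p) (hp1 : p ≤ 1) (hμP : 0 < μP)
    (hβ : Cp ≤ β₁) (hββ : β₁ < β₂) (hβT : β₂ ≤ T)
    (hW : ∀ q : ℝ, W q =
      K + ((1 - C / T) / μP) * q * ∫ t in β₁..β₂, (Cp / T - p * t / T)) :
    (0 < (1 - C / T) / μP) ∧
    (β₂ ≤ Cp / p → ∀ q : ℝ, 0 ≤ q → q ≤ 1 → W 0 ≤ W q) ∧
    (Cp / p ≤ β₁ → ∀ q : ℝ, 0 ≤ q → q ≤ 1 → W 1 ≤ W q) := by
  have hT : 0 < T := hC.trans hCT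
  have hA : 0 < (1 - C / T) / μP := by
    apply div_pos _ hμP
    have : C / T < 1 := (div_lt_one hT).mpr hCT
    linarith
  have hI : (∫ t in β₁..β₂, (Cp / T - p * t / T)) =
      (β₂ - β₁) / T * (Cp - p * (β₁ + β₂) / 2) := by
    have h1 : (fun t : ℝ => Cp / T - p * t / T) = fun t : ℝ => Cp / T - p / T * t := by
      funext t; ring
    rw [h1, intervalIntegral.integral_sub (intervalIntegrable_const)
      ((intervalIntegral.intervalIntegrable_id).const_mul _),
      intervalIntegral.integral_const, intervalIntegral.integral_const_mul,
      integral_id, smul_eq_mul]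
    field_simp
    ring
  have hd : 0 ≤ β₂ - β₁ := by linarith
  refine ⟨hA, ?_, ?_⟩
  · intro hle q hq0 hq1
    have h2 : β₂ * p ≤ Cp := (le_div_iff₀ hp0).mp hle
    have hI0 : 0 ≤ (∫ t in β₁..β₂, (Cp / T - p * t / T)) := by
      rw [hI]
      apply mul_nonneg (by positivity)
      nlinarith
    rw [hW 0, hW q]
    nlinarith [mul_nonneg (mul_nonneg hA.le hq0) hI0]
  · intro hle q hq0 hq1
    have h2 : Cp ≤ β₁ * p := by
      have := (div_le_iff₀ hp0).mp hle
      linarith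
    have hI0 : (∫ t in β₁..β₂, (Cp / T - p * t / T)) ≤ 0 := by
      rw [hI]
      apply mul_nonpos_of_nonneg_of_nonpos (by positivity)
      nlinarith
    rw [hW 1, hW q]
    nlinarith [mul_nonpos_of_nonneg_of_nonpos
      (mul_nonneg hA.le (by linarith : (0:ℝ) ≤ 1 - q)) hI0]
end

section
/- With proactive checkpointing taken exactly for predictions falling in [C_p/p, T] (and ignored before), the fault-related waste equals Waste_fault = (1/μ)*((1-r)*T/2 + (r/p)*C_p*(1 - C_p/(2*p*T)) + D + R), i.e., (1/μ_P)*(1/T)*(∫₀^{C_p/p} p(t+D+R) dt + ∫_{C_p/p}^{T} (p(C_p+D+R)+(1-p)C_p) dt) + (1/μ_NP)*(T/2 + D + R) equals this expression. -/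
theorem optimal_policy_waste_fault (T Cp D R μ r p : ℝ)
    (hCp : 0 < Cp) (hp0 : 0 < p) (hp1 : p ≤ 1)
    (hT : Cp / p ≤ T) (hr0 : 0 ≤ r) (hr1 : r ≤ 1)
    (hD : 0 ≤ D) (hR : 0 ≤ R) (hμ : 0 < μ) :
    (r / (p * μ)) * ((1 / T) *
        ((∫ t in (0)..(Cp / p), p * (t + D + R))
          + ∫ t in (Cp / p)..T, (p * (Cp + D + R) + (1 - p) * Cp)))
      + ((1 - r) / μ) * (T / 2 + D + R)
    = (1 / μ) * ((1 - r) * (T / 2) + (r / p) * Cp * (1 - Cp / (2 * p * T))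
        + D + R) := by
  have hT0 : 0 < T := lt_of_lt_of_le (div_pos hCp hp0) hT
  have h1 : (∫ t in (0:ℝ)..(Cp / p), p * (t + D + R))
      = p * ((Cp/p)^2/2 + (D+R)*(Cp/p)) := by
    have : ∀ t : ℝ, p * (t + D + R) = p * t + p * (D + R) := fun t => by ring
    simp only [this]
    have hi1 : IntervalIntegrable (fun t : ℝ => p * t) MeasureTheory.volume 0 (Cp/p) :=
      (continuous_const.mul continuous_id).intervalIntegrable _ _
    have hi2 : IntervalIntegrable (fun _ : ℝ => p * (D + R)) MeasureTheory.volume 0 (Cp/p) :=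
      continuous_const.intervalIntegrable _ _
    rw [intervalIntegral.integral_add hi1 hi2,
      intervalIntegral.integral_const_mul, integral_id, intervalIntegral.integral_const]
    simp only [smul_eq_mul]
    ring
  rw [h1, intervalIntegral.integral_const, smul_eq_mul]
  field_simp
  ring
end
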